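/- Set φ₁ = 11π/18, φ₂ = 7π/18, φ₃ = 4π/18 and α₁ = π/18, α₂ = 5π/18, α₃ = 6π/18. There is no integer q such that cos φ₁ / cos φ₂ = (cos α₁ / cos α₂)^q, cos φ₁ / cos φ₃ = (cos α₁ / cos α₃)^q, and cos φ₂ / cos φ₃ = (cos α₂ / cos α₃)^q hold simultaneously. -/
import Mathlib


open Real

/-- Sub-case 3/A: the three sum-of-roots relations at the fusion angles
admit no common integer solution `q`. -/
theorem no_integer_power_subcase3A : ¬ ∃ q : ℤ,
    cos (11 * π / 18) / cos (7 * π / 18) = (cos (π / 18) / cos (5 * π / 18)) ^ q ∧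
    cos (11 * π / 18) / cos (4 * π / 18) = (cos (π / 18) / cos (6 * π / 18)) ^ q ∧
    cos (7 * π / 18) / cos (4 * π / 18) = (cos (5 * π / 18) / cos (6 * π / 18)) ^ q := by
  have hπ := pi_pos
  rintro ⟨q, h1, -, -⟩
  have h11 : cos (11 * π / 18) < 0 := by
    apply Real.cos_neg_of_pi_div_two_lt_of_lt <;> nlinarith
  have h7 : 0 < cos (7 * π / 18) := by
    apply Real.cos_pos_of_mem_Ioo; constructor <;> [nlinarith; nlinarith]
  have h1p : 0 < cos (π / 18) := by
    apply Real.cos_pos_of_mem_Ioo; constructor <;> [nlinarith; nlinarith]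
  have h5 : 0 < cos (5 * π / 18) := by
    apply Real.cos_pos_of_mem_Ioo; constructor <;> [nlinarith; nlinarith]
  have hL : cos (11 * π / 18) / cos (7 * π / 18) < 0 := div_neg_of_neg_of_pos h11 h7
  have hR : (0:ℝ) < (cos (π / 18) / cos (5 * π / 18)) ^ q :=
    zpow_pos (div_pos h1p h5) q
  linarith [h1 ▸ hL]
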